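/- Let p be an odd prime and let s : ℕ → 𝔽_p be the p-Singer sequence. Then in the formal power series ring 𝔽_p[[X]], one has (∑_{i≥0} s(i)·X^i)² = 1 + X². (That is, the Laurent series of the p-Singer sequence equals (1 + t^{−2})^{1/2}.) -/

import Mathlib

open PowerSeries Finset

section Expand

variable {R : Type*} [CommRing R]

noncomputable def pexp (k : ℕ) (f : PowerSeries R) : PowerSeries R :=
  PowerSeries.mk fun n => if k ∣ n then PowerSeries.coeff (n / k) f else 0

lemma coeff_pexp (k n : ℕ) (f : PowerSeries R) :
    PowerSeries.coeff n (pexp k f) = if k ∣ n then PowerSeries.coeff (n / k) f else 0 :=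
  coeff_mk _ _

lemma pexp_one (k : ℕ) : pexp k (1 : PowerSeries R) = 1 := by
  ext n
  simp only [coeff_pexp, PowerSeries.coeff_one]
  rcases eq_or_ne n 0 with rfl | hn
  · simp
  · rw [if_neg hn]
    split_ifs with h h2
    · exact absurd (by rw [← Nat.div_mul_cancel h, h2, zero_mul]) hn
    · rfl
    · rfl

lemma pexp_mul {k : ℕ} (hk : 0 < k) (f g : PowerSeries R) :
    pexp k (f * g) = pexp k f * pexp k g := by
  ext n
  rw [PowerSeries.coeff_mul, coeff_pexp]
  simp only [coeff_pexp]
  by_cases hn : k ∣ n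
  · obtain ⟨m, rfl⟩ := hn
    rw [if_pos (dvd_mul_right k m), Nat.mul_div_cancel_left m hk, PowerSeries.coeff_mul]
    have hsub : (antidiagonal m).map ⟨fun x => (k * x.1, k * x.2), id <| by
        intro a b hab
        simp only [Prod.mk.injEq] at hab
        exact Prod.ext (Nat.eq_of_mul_eq_mul_left hk hab.1)
          (Nat.eq_of_mul_eq_mul_left hk hab.2)⟩ ⊆ antidiagonal (k * m) := by
      intro x hx
      simp only [mem_map, Function.Embedding.coeFn_mk, HasAntidiagonal.mem_antidiagonal] at hx ⊢
      obtain ⟨a, ha, rfl⟩ := hx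
      dsimp only
      rw [← Nat.mul_add, ha]
    rw [← Finset.sum_subset hsub ?_, Finset.sum_map]
    · apply Finset.sum_congr rfl
      intro x _
      simp [Nat.mul_div_cancel_left _ hk, dvd_mul_right]
    · intro x hx hx'
      by_cases h1 : k ∣ x.1
      · exfalso
        apply hx'
        have hsum : x.1 + x.2 = k * m := HasAntidiagonal.mem_antidiagonal.mp hx
        have h2 : k ∣ x.2 := (Nat.dvd_add_right h1).mp (hsum ▸ dvd_mul_right k m)
        simp only [mem_map, Function.Embedding.coeFn_mk]
        refine ⟨(x.1 / k, x.2 / k), ?_, ?_⟩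
        · rw [HasAntidiagonal.mem_antidiagonal]
          have h3 : k * (x.1 / k + x.2 / k) = k * m := by
            rw [Nat.mul_add, Nat.mul_div_cancel' h1, Nat.mul_div_cancel' h2, hsum]
          exact Nat.eq_of_mul_eq_mul_left hk h3
        · ext <;> simp [Nat.mul_div_cancel' h1, Nat.mul_div_cancel' h2]
      · rw [if_neg h1, zero_mul]
  · rw [if_neg hn]
    symm
    apply Finset.sum_eq_zero
    intro x hx
    by_cases h1 : k ∣ x.1
    · have h2 : ¬ k ∣ x.2 := fun h2 => hn (HasAntidiagonal.mem_antidiagonal.mp hx ▸ dvd_add h1 h2)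
      rw [if_neg h2, mul_zero]
    · rw [if_neg h1, zero_mul]

lemma pexp_pow {k : ℕ} (hk : 0 < k) (f : PowerSeries R) (m : ℕ) :
    pexp k (f ^ m) = (pexp k f) ^ m := by
  induction m with
  | zero => simpa using pexp_one k
  | succ m ih => rw [pow_succ, pexp_mul hk, ih, pow_succ]

lemma pexp_one_add_X {k : ℕ} (hk : 0 < k) :
    pexp k (1 + X : PowerSeries R) = 1 + X ^ k := by
  ext n
  simp only [coeff_pexp, map_add, PowerSeries.coeff_one, PowerSeries.coeff_X,
    PowerSeries.coeff_X_pow]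
  rcases eq_or_ne n 0 with rfl | hn
  · simp [hk.ne]
  · rcases eq_or_ne n k with rfl | hnk
    · rw [if_pos dvd_rfl, Nat.div_self hk]
      simp [hn]
    · rw [if_neg hn, if_neg hnk]
      split_ifs with h h2 h3 h4
      · exact absurd h3 (by omega)
      · exact absurd (by rw [← Nat.div_mul_cancel h, h2, zero_mul]) hn
      · exact absurd (by rw [← Nat.div_mul_cancel h, h4, one_mul]) hnk
      · simp
      · simp

lemma pexp_fixed_eq_one {k : ℕ} (hk : 2 ≤ k) (f : PowerSeries R)
    (h : f = pexp k f) (h0 : PowerSeries.coeff 0 f = 1) : f = 1 := by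
  ext n
  induction n using Nat.strong_induction_on with
  | _ n ih =>
    rcases eq_or_ne n 0 with rfl | hn
    · simpa using h0
    · rw [PowerSeries.coeff_one, if_neg hn]
      conv_lhs => rw [h]
      rw [coeff_pexp]
      split_ifs with hd
      · have h1 : n / k < n := Nat.div_lt_self (Nat.pos_of_ne_zero hn) (by omega)
        have h2 : n / k ≠ 0 := by
          intro h0'
          exact hn (by rw [← Nat.div_mul_cancel hd, h0', zero_mul])
        have := ih (n / k) h1
        rw [PowerSeries.coeff_one, if_neg h2] at this
        exact this
      · rfl

lemma coeff_one_add_X_pow' (m n : ℕ) :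
    PowerSeries.coeff n ((1 + X) ^ m) = (m.choose n : R) := by
  have h := Polynomial.coeff_one_add_X_pow R m n
  rw [← Polynomial.coeff_coe, Polynomial.coe_pow, Polynomial.coe_add, Polynomial.coe_one,
    Polynomial.coe_X] at h
  exact h

lemma mk_eq_mul_pexp {k : ℕ} (hk : 0 < k) (a b c : ℕ → R)
    (hc : ∀ i, k ≤ i → c i = 0)
    (hab : ∀ n i, i < k → a (k * n + i) = c i * b n) :
    PowerSeries.mk a = PowerSeries.mk c * pexp k (PowerSeries.mk b) := by
  ext n
  rw [coeff_mk, PowerSeries.coeff_mul]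
  simp only [coeff_pexp, coeff_mk]
  rw [Finset.sum_eq_single (n % k, k * (n / k))]
  · rw [if_pos (dvd_mul_right k (n / k)), Nat.mul_div_cancel_left _ hk,
      ← hab (n / k) (n % k) (Nat.mod_lt n hk)]
    rw [Nat.div_add_mod n k]
  · rintro ⟨i, j⟩ hx hne
    simp only [HasAntidiagonal.mem_antidiagonal] at hx
    by_cases hj : k ∣ j
    · by_cases hi : i < k
      · exfalso
        apply hne
        obtain ⟨t, rfl⟩ := hj
        have h1 : n % k = i := by
          rw [← hx, Nat.add_mul_mod_self_left, Nat.mod_eq_of_lt hi]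
        have h2 : n / k = t := by
          rw [← hx, Nat.add_mul_div_left _ _ hk, Nat.div_eq_of_lt hi, zero_add]
        rw [h1, h2]
      · rw [hc i (le_of_not_gt hi), zero_mul]
    · rw [if_neg hj, mul_zero]
  · intro hmem
    exfalso
    exact hmem (HasAntidiagonal.mem_antidiagonal.mpr (by rw [add_comm]; exact Nat.div_add_mod n k))

end Expand

/-- the square of the power series of the p-Singer sequence
equals 1 + X² in 𝔽_p[[X]]. -/
theorem singer_series_sq (p : ℕ) (hp : p.Prime) (hodd : Odd p)
    (σ s : ℕ → ZMod p)
    (hσ0 : σ 0 = 1)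
    (hσ : ∀ n i : ℕ, i < p →
      σ (p * n + i) = ((((p - 1) / 2).choose i : ℕ) : ZMod p) * σ n)
    (hs : ∀ n i : ℕ, i < 2 * p →
      s (2 * p * n + i) =
        (if i % 2 = 0 then ((((p - 1) / 2 + 1).choose (i / 2) : ℕ) : ZMod p) else 0) * σ n) :
    (PowerSeries.mk s) ^ 2 = 1 + PowerSeries.X ^ 2 := by
  haveI : Fact p.Prime := ⟨hp⟩
  haveI : CharP (PowerSeries (ZMod p)) p :=
    charP_of_injective_ringHom (PowerSeries.C_injective (R := ZMod p)) p
  have hp3 : 3 ≤ p := by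
    rcases hodd with ⟨k, hk⟩; have := hp.two_le; omega
  have hpp : 2 * ((p - 1) / 2) + 1 = p := by
    rcases hodd with ⟨k, hk⟩; omega
  set p₂ := (p - 1) / 2 with hp₂def
  set Sg := PowerSeries.mk σ with hSgdef
  -- E1 : Sg = (1+X)^p₂ * pexp p Sg
  have hc1 : (PowerSeries.mk fun i => ((p₂.choose i : ℕ) : ZMod p))
      = (1 + X : (ZMod p)⟦X⟧) ^ p₂ := by
    ext n
    rw [coeff_mk, coeff_one_add_X_pow']
  have E1 : Sg = (1 + X) ^ p₂ * pexp p Sg := by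
    rw [← hc1]
    exact mk_eq_mul_pexp hp.pos σ σ _
      (fun i hi => by
        rw [Nat.choose_eq_zero_of_lt (by omega), Nat.cast_zero])
      (fun n i hi => hσ n i hi)
  -- E2 : mk s = (1+X^2)^(p₂+1) * pexp (2p) Sg
  have hc2 : (PowerSeries.mk fun i =>
        (if i % 2 = 0 then (((p₂ + 1).choose (i / 2) : ℕ) : ZMod p) else 0))
      = (1 + X ^ 2 : (ZMod p)⟦X⟧) ^ (p₂ + 1) := by
    have h2 : ((1 + X ^ 2 : (ZMod p)⟦X⟧)) ^ (p₂ + 1) = pexp 2 ((1 + X) ^ (p₂ + 1)) := by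
      rw [pexp_pow two_pos, pexp_one_add_X two_pos]
    rw [h2]
    ext n
    rw [coeff_mk, coeff_pexp, coeff_one_add_X_pow']
    by_cases hpar : n % 2 = 0
    · rw [if_pos (by omega : 2 ∣ n), if_pos hpar]
    · rw [if_neg (by omega : ¬ 2 ∣ n), if_neg hpar]
  have E2 : PowerSeries.mk s = (1 + X ^ 2) ^ (p₂ + 1) * pexp (2 * p) Sg := by
    rw [← hc2]
    exact mk_eq_mul_pexp (by omega) s σ _
      (fun i hi => by
        split_ifs with h
        · rw [Nat.choose_eq_zero_of_lt (by omega), Nat.cast_zero]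
        · rfl)
      (fun n i hi => hs n i hi)
  -- G = (1+X) * Sg^2 is fixed by pexp p
  set G := (1 + X : (ZMod p)⟦X⟧) * Sg ^ 2 with hGdef
  have hGfix : G = pexp p G := by
    calc G = (1 + X) * ((1 + X) ^ p₂ * pexp p Sg) ^ 2 := by rw [hGdef, ← E1]
      _ = ((1 + X) * ((1 + X) ^ p₂) ^ 2) * pexp p (Sg ^ 2) := by
          rw [mul_pow, ← pexp_pow hp.pos]; ring
      _ = (1 + X) ^ p * pexp p (Sg ^ 2) := by
          rw [← pow_mul, ← pow_succ', (by omega : p₂ * 2 + 1 = p)]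
      _ = (1 + X ^ p) * pexp p (Sg ^ 2) := by
          rw [add_pow_char, one_pow]
      _ = pexp p (1 + X) * pexp p (Sg ^ 2) := by rw [pexp_one_add_X hp.pos]
      _ = pexp p G := by rw [← pexp_mul hp.pos, hGdef]
  have hG0 : PowerSeries.coeff 0 G = 1 := by
    rw [hGdef, hSgdef]
    simp [PowerSeries.coeff_zero_eq_constantCoeff, map_mul, map_add, map_pow,
      PowerSeries.constantCoeff_mk, hσ0]
  have hG1 : G = 1 := pexp_fixed_eq_one hp.two_le G hGfix hG0
  -- pexp (2p) of G = 1
  have key : (1 + X ^ 2 : (ZMod p)⟦X⟧) ^ p * pexp (2 * p) (Sg ^ 2) = 1 := by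
    have h1 : pexp (2 * p) G = 1 := by rw [hG1, pexp_one]
    have h2 : pexp (2 * p) G = (1 + X ^ (2 * p)) * pexp (2 * p) (Sg ^ 2) := by
      rw [hGdef, pexp_mul (by omega), pexp_one_add_X (by omega : (0:ℕ) < 2 * p)]
    have h3 : (1 + X ^ (2 * p) : (ZMod p)⟦X⟧) = (1 + X ^ 2) ^ p := by
      rw [add_pow_char, one_pow, ← pow_mul]
    rw [← h3, ← h2, h1]
  -- conclude
  have hne : (1 + X ^ 2 : (ZMod p)⟦X⟧) ^ p ≠ 0 := by
    apply pow_ne_zero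
    intro h
    have := congrArg ((PowerSeries.constantCoeff (R := ZMod p))) h
    simp at this
  apply mul_left_cancel₀ hne
  calc (1 + X ^ 2 : (ZMod p)⟦X⟧) ^ p * (PowerSeries.mk s) ^ 2
      = (1 + X ^ 2) ^ (2 * (p₂ + 1)) * ((1 + X ^ 2) ^ p * pexp (2 * p) (Sg ^ 2)) := by
        rw [E2, mul_pow, ← pexp_pow (by omega : (0:ℕ) < 2 * p), ← pow_mul,
          mul_comm (p₂ + 1) 2]
        ring
    _ = (1 + X ^ 2) ^ (2 * (p₂ + 1)) := by rw [key, mul_one]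
    _ = (1 + X ^ 2) ^ p * (1 + X ^ 2) := by
        rw [(by omega : 2 * (p₂ + 1) = p + 1), pow_succ]
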